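/- Let q be a natural number and let J₀ denote the real matrix indexed by Fin q ⊕ Fin q given in block form by J₀ = Matrix.fromBlocks 0 (−1) 1 0 (the canonical complex structure on ℝ^{2q}). If J is a real matrix indexed by Fin q ⊕ Fin q satisfying Jᵀ * J = 1 and J * J = −1, then there exists a real matrix P indexed by Fin q ⊕ Fin q with Pᵀ * P = 1 such that J = P * J₀ * Pᵀ. (The orthogonal group O(2q) acts transitively by conjugation on the set Z(q) of orthogonal complex structures on ℝ^{2q}.) -/

import Mathlib

open Matrix

/-- The canonical complex structure `J₀` on `ℝ^{2q}`. -/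
def J0 (q : ℕ) : Matrix (Fin q ⊕ Fin q) (Fin q ⊕ Fin q) ℝ :=
  Matrix.fromBlocks 0 (-1) 1 0

noncomputable section

namespace OCSAux

/-- Bundled orthogonal complex structure. -/
structure OCS (q : ℕ) where
  J : Matrix (Fin q ⊕ Fin q) (Fin q ⊕ Fin q) ℝ
  h1 : Jᵀ * J = 1
  h2 : J * J = -1

variable {q : ℕ} (c : OCS q)

lemma hJT : c.Jᵀ = -c.J := by
  have hinv : c.J * (-c.J) = 1 := by rw [Matrix.mul_neg, c.h2, neg_neg]
  calc c.Jᵀ = c.Jᵀ * (c.J * (-c.J)) := by rw [hinv, mul_one]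
    _ = (c.Jᵀ * c.J) * (-c.J) := by rw [mul_assoc]
    _ = -c.J := by rw [c.h1, one_mul]

lemma sqv (x : (Fin q ⊕ Fin q) → ℝ) : c.J *ᵥ (c.J *ᵥ x) = -x := by
  rw [Matrix.mulVec_mulVec, c.h2]
  rw [show (-1 : Matrix (Fin q ⊕ Fin q) (Fin q ⊕ Fin q) ℝ) = -(1:Matrix _ _ ℝ) from rfl,
    Matrix.neg_mulVec, Matrix.one_mulVec]

lemma dotJ (x y : (Fin q ⊕ Fin q) → ℝ) :
    (c.J *ᵥ x) ⬝ᵥ y = -(x ⬝ᵥ (c.J *ᵥ y)) := by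
  have h : x ᵥ* c.J = -(c.J *ᵥ x) := by
    calc x ᵥ* c.J = x ᵥ* c.Jᵀᵀ := by rw [Matrix.transpose_transpose]
      _ = c.Jᵀ *ᵥ x := Matrix.vecMul_transpose _ _
      _ = -(c.J *ᵥ x) := by rw [hJT, Matrix.neg_mulVec]
  rw [Matrix.dotProduct_mulVec, h, neg_dotProduct, neg_neg]

lemma dotJJ (x y : (Fin q ⊕ Fin q) → ℝ) :
    (c.J *ᵥ x) ⬝ᵥ (c.J *ᵥ y) = x ⬝ᵥ y := by
  rw [dotJ, sqv, dotProduct_neg, neg_neg]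


/-- Type synonym for `ℝ^{2q}` carrying the complex structure given by `c.J`. -/
def W (c : OCS q) : Type := (Fin q ⊕ Fin q) → ℝ

instance : AddCommGroup (W c) := inferInstanceAs (AddCommGroup ((Fin q ⊕ Fin q) → ℝ))
instance : Module ℝ (W c) := inferInstanceAs (Module ℝ ((Fin q ⊕ Fin q) → ℝ))
instance : Module.Finite ℝ (W c) :=
  inferInstanceAs (Module.Finite ℝ ((Fin q ⊕ Fin q) → ℝ))

/-- View an element of `W c` as a plain vector. -/
def ofW (v : W c) : (Fin q ⊕ Fin q) → ℝ := v
/-- View a plain vector as an element of `W c`. -/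
def toW (v : (Fin q ⊕ Fin q) → ℝ) : W c := v

instance : SMul ℂ (W c) :=
  ⟨fun z v => toW c (z.re • ofW c v + z.im • (c.J *ᵥ ofW c v))⟩

lemma csmul_def (z : ℂ) (v : W c) :
    z • v = toW c (z.re • ofW c v + z.im • (c.J *ᵥ ofW c v)) := rfl

lemma ofW_add (u v : W c) : ofW c (u + v) = ofW c u + ofW c v := rfl
lemma ofW_smul (r : ℝ) (v : W c) : ofW c (r • v) = r • ofW c v := rfl
lemma ofW_toW (v : (Fin q ⊕ Fin q) → ℝ) : ofW c (toW c v) = v := rfl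
lemma toW_inj {u v : (Fin q ⊕ Fin q) → ℝ} (h : u = v) : toW c u = toW c v := by rw [h]
lemma toW_ofW (v : W c) : toW c (ofW c v) = v := rfl

instance : Module ℂ (W c) where
  one_smul v := by
    rw [csmul_def, Complex.one_re, Complex.one_im, one_smul, zero_smul, add_zero]; rfl
  mul_smul z w v := by
    rw [csmul_def, csmul_def, csmul_def]
    apply toW_inj
    simp only [ofW_toW, Matrix.mulVec_add, Matrix.mulVec_smul, sqv,
      Complex.mul_re, Complex.mul_im]
    module
  smul_zero z := by
    rw [csmul_def]
    apply toW_inj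
    rw [show ofW c (0 : W c) = 0 from rfl]
    simp
    rfl
  smul_add z u v := by
    rw [csmul_def, csmul_def, csmul_def, ofW_add]
    rw [show toW c _ + toW c _ = toW c ((z.re • ofW c u + z.im • c.J *ᵥ ofW c u)
      + (z.re • ofW c v + z.im • c.J *ᵥ ofW c v)) from rfl]
    apply toW_inj
    rw [Matrix.mulVec_add]
    module
  add_smul z w v := by
    rw [csmul_def, csmul_def, csmul_def]
    rw [show toW c _ + toW c _ = toW c ((z.re • ofW c v + z.im • c.J *ᵥ ofW c v)
      + (w.re • ofW c v + w.im • c.J *ᵥ ofW c v)) from rfl]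
    apply toW_inj
    rw [Complex.add_re, Complex.add_im]
    module
  zero_smul v := by
    rw [csmul_def]
    apply toW_inj
    simp
    rfl

instance : IsScalarTower ℝ ℂ (W c) := ⟨fun r z v => by
  rw [csmul_def, csmul_def, Complex.real_smul, Complex.mul_re, Complex.mul_im,
    Complex.ofReal_re, Complex.ofReal_im]
  rw [show r • toW c (z.re • ofW c v + z.im • c.J *ᵥ ofW c v)
      = toW c (r • (z.re • ofW c v + z.im • c.J *ᵥ ofW c v)) from rfl]
  apply toW_inj
  module⟩


instance innerW : Inner ℂ (W c) :=
  ⟨fun u v => ⟨ofW c u ⬝ᵥ ofW c v, -(ofW c u ⬝ᵥ (c.J *ᵥ ofW c v))⟩⟩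

lemma inner_re (u v : W c) : (inner ℂ u v : ℂ).re = ofW c u ⬝ᵥ ofW c v := rfl
lemma inner_im (u v : W c) : (inner ℂ u v : ℂ).im = -(ofW c u ⬝ᵥ (c.J *ᵥ ofW c v)) := rfl

lemma ofW_csmul (z : ℂ) (v : W c) :
    ofW c (z • v) = z.re • ofW c v + z.im • (c.J *ᵥ ofW c v) := rfl

lemma ofW_zero : ofW c (0 : W c) = 0 := rfl

instance core : InnerProductSpace.Core ℂ (W c) where
  conj_inner_symm x y := by
    apply Complex.ext
    · rw [Complex.conj_re, inner_re, inner_re]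
      exact dotProduct_comm _ _
    · rw [Complex.conj_im, inner_im, inner_im, neg_neg,
        dotProduct_comm, dotJ]
  re_inner_nonneg x := by
    rw [RCLike.re_to_complex, inner_re]
    exact Finset.sum_nonneg fun i _ => mul_self_nonneg _
  add_left x y z := by
    apply Complex.ext
    · rw [Complex.add_re, inner_re, inner_re, inner_re, ofW_add,
        add_dotProduct]
    · rw [Complex.add_im, inner_im, inner_im, inner_im, ofW_add,
        add_dotProduct, neg_add]
  smul_left x y r := by
    apply Complex.ext
    · rw [Complex.mul_re, Complex.conj_re, Complex.conj_im, inner_re, inner_re,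
        inner_im, ofW_csmul, add_dotProduct, smul_dotProduct,
        smul_dotProduct, dotJ, smul_eq_mul, smul_eq_mul]
      ring
    · rw [Complex.mul_im, Complex.conj_re, Complex.conj_im, inner_re, inner_im,
        inner_im, ofW_csmul, add_dotProduct, smul_dotProduct,
        smul_dotProduct, dotJ, sqv, dotProduct_neg, smul_eq_mul, smul_eq_mul]
      ring
  definite x hx := by
    have h0 : ofW c x ⬝ᵥ ofW c x = 0 := by
      have := congrArg Complex.re hx
      rwa [inner_re] at this
    exact dotProduct_self_eq_zero.mp h0


instance : NormedAddCommGroup (W c) :=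
  @InnerProductSpace.Core.toNormedAddCommGroup ℂ (W c) _ _ _ (core c)

instance : InnerProductSpace ℂ (W c) := InnerProductSpace.ofCore (core c).toCore

instance : FiniteDimensional ℂ (W c) :=
  Module.Finite.of_restrictScalars_finite ℝ ℂ (W c)

lemma finrank_W : Module.finrank ℂ (W c) = q := by
  have h := Module.finrank_mul_finrank ℝ ℂ (W c)
  rw [Complex.finrank_real_complex] at h
  have hW : Module.finrank ℝ (W c) = q + q := by
    have e : Module.finrank ℝ (W c) = Module.finrank ℝ ((Fin q ⊕ Fin q) → ℝ) := rfl
    rw [e, Module.finrank_fintype_fun_eq_card, Fintype.card_sum, Fintype.card_fin]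
  omega

end OCSAux
end

/-- The orthogonal group `O(2q)` acts transitively by conjugation on the set of
orthogonal complex structures on `ℝ^{2q}`. -/
theorem orthogonal_complex_structure_conjugate_to_J0 (q : ℕ)
    (J : Matrix (Fin q ⊕ Fin q) (Fin q ⊕ Fin q) ℝ)
    (h1 : Jᵀ * J = 1) (h2 : J * J = -1) :
    ∃ P : Matrix (Fin q ⊕ Fin q) (Fin q ⊕ Fin q) ℝ,
      Pᵀ * P = 1 ∧ J = P * J0 q * Pᵀ := by
  classical
  set c : OCSAux.OCS q := ⟨J, h1, h2⟩ with hc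
  have hcJ : c.J = J := rfl
  set b := (stdOrthonormalBasis ℂ (OCSAux.W c)).reindex (finCongr (OCSAux.finrank_W c))
    with hbdef
  have hb := b.orthonormal
  rw [orthonormal_iff_ite] at hb
  set v : Fin q → (Fin q ⊕ Fin q) → ℝ := fun i => OCSAux.ofW c (b i) with hv
  have key1 : ∀ i j, v i ⬝ᵥ v j = if i = j then 1 else 0 := by
    intro i j
    have h : v i ⬝ᵥ v j = (if i = j then (1:ℂ) else 0).re := congrArg Complex.re (hb i j)
    rwa [apply_ite Complex.re, Complex.one_re, Complex.zero_re] at h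
  have key2 : ∀ i j, v i ⬝ᵥ (J *ᵥ v j) = 0 := by
    intro i j
    have h : -(v i ⬝ᵥ (J *ᵥ v j)) = (if i = j then (1:ℂ) else 0).im :=
      congrArg Complex.im (hb i j)
    rw [apply_ite Complex.im, Complex.one_im, Complex.zero_im, ite_self] at h
    exact neg_eq_zero.mp h
  have dJ : ∀ x y : (Fin q ⊕ Fin q) → ℝ, (J *ᵥ x) ⬝ᵥ y = -(x ⬝ᵥ (J *ᵥ y)) := by
    have := OCSAux.dotJ c; rwa [hcJ] at this
  have dJJ : ∀ x y : (Fin q ⊕ Fin q) → ℝ, (J *ᵥ x) ⬝ᵥ (J *ᵥ y) = x ⬝ᵥ y := by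
    have := OCSAux.dotJJ c; rwa [hcJ] at this
  have sq : ∀ x : (Fin q ⊕ Fin q) → ℝ, J *ᵥ (J *ᵥ x) = -x := by
    have := OCSAux.sqv c; rwa [hcJ] at this
  set P : Matrix (Fin q ⊕ Fin q) (Fin q ⊕ Fin q) ℝ :=
    Matrix.of fun k m => Sum.elim (fun i => v i k) (fun i => (J *ᵥ v i) k) m with hP
  have hPtP : Pᵀ * P = 1 := by
    ext m m'
    rw [Matrix.mul_apply, Matrix.one_apply]
    cases m with
    | inl i =>
      cases m' with
      | inl j =>
        have e : ∑ k, Pᵀ (Sum.inl i) k * P k (Sum.inl j) = v i ⬝ᵥ v j := rfl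
        rw [e, key1]
        simp
      | inr j =>
        have e : ∑ k, Pᵀ (Sum.inl i) k * P k (Sum.inr j) = v i ⬝ᵥ (J *ᵥ v j) := rfl
        rw [e, key2]
        simp
    | inr i =>
      cases m' with
      | inl j =>
        have e : ∑ k, Pᵀ (Sum.inr i) k * P k (Sum.inl j) = (J *ᵥ v i) ⬝ᵥ v j := rfl
        rw [e, dJ, key2, neg_zero]
        simp
      | inr j =>
        have e : ∑ k, Pᵀ (Sum.inr i) k * P k (Sum.inr j) = (J *ᵥ v i) ⬝ᵥ (J *ᵥ v j) := rfl
        rw [e, dJJ, key1]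
        simp
  have hcomm : J * P = P * J0 q := by
    ext k m
    rw [Matrix.mul_apply, Matrix.mul_apply]
    cases m with
    | inl j =>
      have el : ∑ n, J k n * P n (Sum.inl j) = (J *ᵥ v j) k := rfl
      rw [el]
      rw [Fintype.sum_sum_type]
      simp [hP, J0, Matrix.one_apply]
    | inr j =>
      have el : ∑ n, J k n * P n (Sum.inr j) = (J *ᵥ (J *ᵥ v j)) k := rfl
      rw [el, sq]
      rw [Fintype.sum_sum_type]
      simp [hP, J0, Matrix.one_apply]
  refine ⟨P, hPtP, ?_⟩
  have hPPt : P * Pᵀ = 1 := mul_eq_one_comm.mp hPtP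
  calc J = J * (P * Pᵀ) := by rw [hPPt, mul_one]
    _ = (J * P) * Pᵀ := by rw [mul_assoc]
    _ = P * J0 q * Pᵀ := by rw [hcomm]
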